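/- Jacobian between sets of roots: let N≥1, t∈ℝ, and let x ∈ A_N(t), where A_N(t) = {x∈ℝ^N_< : the polynomial P_x(λ)−t has N distinct real roots}, with P_x(λ)=∏_{k=1}^N(λ−x_k). Let y^t(x) ∈ ℝ^N_< denote the increasingly ordered roots of P_x − t. Then the map y^t is differentiable at x and the absolute value of the determinant of its differential equals Δ(x)/Δ(y^t(x)), where Δ(x)=∏_{i<j}(x_j−x_i). In particular, for λ⁻ ∈ A_N(4ε_N) with image λ⁺ = y^{4ε_N}(λ⁻) one has |det D_{λ⁻} λ⁺| = Δ(λ⁻)/Δ(λ⁺), and for η ∈ A_N(2ε_N) with image λ⁺ = y^{2ε_N}(η) one has |det D_{η} λ⁺| = Δ(η)/Δ(λ⁺). -/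

import Mathlib

open MeasureTheory

/-- Vandermonde determinant `Δ(x) = ∏_{i<j} (x_j - x_i)`. -/
noncomputable def vdm {m : ℕ} (x : Fin m → ℝ) : ℝ :=
  ∏ i : Fin m, ∏ j : Fin m, if i < j then x j - x i else 1

/-- The set `A_N(t)` of strictly increasing `x` such that `P_x − t` has `N` distinct
real roots, where `P_x(λ) = ∏ (λ − x_k)`. -/
def ANt (N : ℕ) (t : ℝ) : Set (Fin N → ℝ) :=
  {x | StrictMono x ∧ ∃ y : Fin N → ℝ, StrictMono y ∧
    ∀ z : ℝ, (∏ k, (z - x k)) - t = ∏ k, (z - y k)}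

/-- The map `y^t` sending `x ∈ A_N(t)` to the increasingly ordered roots of `P_x − t`. -/
noncomputable def rootMap (N : ℕ) (t : ℝ) (x : Fin N → ℝ) : Fin N → ℝ := by
  classical
  exact
    if h : ∃ y : Fin N → ℝ, StrictMono y ∧
        ∀ z : ℝ, (∏ k, (z - x k)) - t = ∏ k, (z - y k)
    then h.choose else x

namespace RootJacAux

open Finset Polynomial

variable {N : ℕ}

noncomputable def sprod (x : Fin N → ℝ) : ℝ := ∏ i, ∏ j ∈ Finset.Ioi i, (x j - x i)

lemma vdm_eq_sprod (x : Fin N → ℝ) : vdm x = sprod x := by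
  unfold vdm sprod
  refine Finset.prod_congr rfl fun i _ => ?_
  have h : Finset.Ioi i = Finset.univ.filter (fun j => i < j) := by
    ext j; simp
  rw [h, Finset.prod_filter]

lemma sprod_pos {x : Fin N → ℝ} (hx : StrictMono x) : 0 < sprod x :=
  Finset.prod_pos fun i _ => Finset.prod_pos fun j hj =>
    sub_pos.2 (hx (Finset.mem_Ioi.1 hj))

noncomputable def Emap (N : ℕ) (x : Fin N → ℝ) : Fin N → ℝ := fun k => ∏ i, ((k : ℝ) - x i)

noncomputable def Qpoly (x : Fin N → ℝ) (i : Fin N) : Polynomial ℝ :=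
  ∏ j ∈ Finset.univ.erase i, (Polynomial.X - Polynomial.C (x j))

noncomputable def Mmat (x : Fin N → ℝ) : Matrix (Fin N) (Fin N) ℝ :=
  Matrix.of fun k i => -((Qpoly x i).eval ((k : Fin N) : ℝ))

noncomputable def Lmap (x : Fin N → ℝ) : (Fin N → ℝ) →L[ℝ] (Fin N → ℝ) :=
  LinearMap.toContinuousLinearMap (Matrix.toLin' (Mmat x))

lemma eval_Qpoly (x : Fin N → ℝ) (i : Fin N) (r : ℝ) :
    (Qpoly x i).eval r = ∏ j ∈ Finset.univ.erase i, (r - x j) := by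
  simp [Qpoly, Polynomial.eval_prod]

lemma natDegree_Qpoly_lt (x : Fin N → ℝ) (i : Fin N) : (Qpoly x i).natDegree < N := by
  have h1 : (Qpoly x i).natDegree ≤ ∑ j ∈ Finset.univ.erase i,
      (Polynomial.X - Polynomial.C (x j)).natDegree := Polynomial.natDegree_prod_le _ _
  have h2 : ∑ j ∈ Finset.univ.erase i, (Polynomial.X - Polynomial.C (x j)).natDegree
      = N - 1 := by
    simp [Polynomial.natDegree_X_sub_C, Finset.card_erase_of_mem]
  exact lt_of_le_of_lt (h1.trans h2.le) (Nat.sub_lt i.pos Nat.one_pos)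

lemma hasStrict_Emap (x : Fin N → ℝ) : HasStrictFDerivAt (Emap N) (Lmap x) x := by
  rw [hasStrictFDerivAt_pi']
  intro k
  have h : ∀ i ∈ Finset.univ, HasStrictFDerivAt (fun w : Fin N → ℝ => (k : ℝ) - w i)
      ((0 : (Fin N → ℝ) →L[ℝ] ℝ) - ContinuousLinearMap.proj i) x := fun i _ =>
    (hasStrictFDerivAt_const _ _).sub
      ((ContinuousLinearMap.proj i : (Fin N → ℝ) →L[ℝ] ℝ).hasStrictFDerivAt :
        HasStrictFDerivAt (fun w : Fin N → ℝ => w i) _ x)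
  have h2 := HasStrictFDerivAt.finset_prod h
  refine h2.congr_fderiv ?_
  ext v
  simp only [ContinuousLinearMap.coe_sum', Finset.sum_apply, ContinuousLinearMap.coe_smul',
    Pi.smul_apply, ContinuousLinearMap.sub_apply, ContinuousLinearMap.zero_apply,
    ContinuousLinearMap.proj_apply, ContinuousLinearMap.coe_comp', Function.comp_apply,
    Lmap, LinearMap.coe_toContinuousLinearMap', Matrix.toLin'_apply, Matrix.mulVec,
    dotProduct, Mmat, Matrix.of_apply, eval_Qpoly]
  refine Finset.sum_congr rfl fun i _ => ?_
  simp only [smul_eq_mul]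
  ring

noncomputable def sigmaC (N : ℕ) : ℝ := ∏ i : Fin N, ∏ _j ∈ Finset.Ioi i, (-1 : ℝ)

noncomputable def Kconst (N : ℕ) : ℝ :=
  (-1 : ℝ) ^ N * (Matrix.vandermonde (fun k : Fin N => (k : ℝ))).det * sigmaC N

lemma Kconst_ne_zero (N : ℕ) : Kconst N ≠ 0 := by
  have h1 : ((-1 : ℝ) ^ N) ≠ 0 := pow_ne_zero _ (by norm_num)
  have h2 : (Matrix.vandermonde (fun k : Fin N => (k : ℝ))).det ≠ 0 := by
    rw [Matrix.det_vandermonde_ne_zero_iff]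
    intro a b hab
    exact Fin.ext (Nat.cast_injective hab)
  have h3 : sigmaC N ≠ 0 :=
    Finset.prod_ne_zero_iff.2 fun i _ => Finset.prod_ne_zero_iff.2 fun j _ => by norm_num
  exact mul_ne_zero (mul_ne_zero h1 h2) h3

lemma vand_mul_coeff (x : Fin N → ℝ) (v : Fin N → ℝ) :
    Matrix.vandermonde v * (Matrix.of fun (m i : Fin N) => (Qpoly x i).coeff (m : ℕ)) =
      Matrix.of fun k i => (Qpoly x i).eval (v k) := by
  ext k i
  rw [Matrix.mul_apply, Matrix.of_apply,
    Polynomial.eval_eq_sum_range' (natDegree_Qpoly_lt x i), ← Fin.sum_univ_eq_sum_range]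
  exact Finset.sum_congr rfl fun m _ => by
    rw [Matrix.vandermonde_apply, Matrix.of_apply, mul_comm]

lemma vand_mul_self (x : Fin N → ℝ) :
    Matrix.vandermonde x * (Matrix.of fun (m i : Fin N) => (Qpoly x i).coeff (m : ℕ)) =
      Matrix.diagonal (fun i => ∏ j ∈ Finset.univ.erase i, (x i - x j)) := by
  rw [vand_mul_coeff]
  ext k i
  by_cases h : k = i
  · subst h
    rw [Matrix.of_apply, Matrix.diagonal_apply_eq, eval_Qpoly]
  · rw [Matrix.of_apply, eval_Qpoly, Matrix.diagonal_apply_ne _ h]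
    exact Finset.prod_eq_zero (Finset.mem_erase.2 ⟨h, Finset.mem_univ k⟩) (sub_self _)

lemma prod_erase_eq (x : Fin N → ℝ) :
    (∏ i, ∏ j ∈ Finset.univ.erase i, (x i - x j)) = sigmaC N * sprod x ^ 2 := by
  have herase : ∀ i : Fin N, Finset.univ.erase i = Finset.Iio i ∪ Finset.Ioi i := by
    intro i; ext j
    simp only [Finset.mem_erase, Finset.mem_univ, and_true, Finset.mem_union,
      Finset.mem_Iio, Finset.mem_Ioi]
    exact ⟨fun h => Ne.lt_or_gt h, fun h => h.elim (fun h' => h'.ne) (fun h' => h'.ne')⟩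
  have hdisj : ∀ i : Fin N, Disjoint (Finset.Iio i) (Finset.Ioi i) := by
    intro i
    refine Finset.disjoint_left.2 fun j hj hj' => ?_
    exact absurd (Finset.mem_Ioi.1 hj') (not_lt.2 (Finset.mem_Iio.1 hj).le)
  have hsplit : (∏ i, ∏ j ∈ Finset.univ.erase i, (x i - x j))
      = (∏ i, ∏ j ∈ Finset.Iio i, (x i - x j)) * ∏ i, ∏ j ∈ Finset.Ioi i, (x i - x j) := by
    rw [← Finset.prod_mul_distrib]
    refine Finset.prod_congr rfl fun i _ => ?_
    rw [herase i, Finset.prod_union (hdisj i)]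
  have ha : (∏ i, ∏ j ∈ Finset.Iio i, (x i - x j)) = sprod x := by
    rw [Finset.prod_comm' (t' := Finset.univ) (s' := fun j => Finset.Ioi j)
      (by intro a b; simp)]
    rfl
  have hb : (∏ i, ∏ j ∈ Finset.Ioi i, (x i - x j)) = sigmaC N * sprod x := by
    rw [show (∏ i, ∏ j ∈ Finset.Ioi i, (x i - x j))
        = ∏ i, ∏ j ∈ Finset.Ioi i, ((-1) * (x j - x i)) by
      exact Finset.prod_congr rfl fun i _ => Finset.prod_congr rfl fun j _ => by ring]
    rw [show (∏ i : Fin N, ∏ j ∈ Finset.Ioi i, ((-1 : ℝ) * (x j - x i)))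
        = ∏ i : Fin N, ((∏ _j ∈ Finset.Ioi i, (-1 : ℝ)) * ∏ j ∈ Finset.Ioi i, (x j - x i)) by
      exact Finset.prod_congr rfl fun i _ => Finset.prod_mul_distrib]
    rw [Finset.prod_mul_distrib]
    rfl
  rw [hsplit, ha, hb]; ring

lemma det_Mmat (x : Fin N → ℝ) (hx : StrictMono x) : (Mmat x).det = Kconst N * sprod x := by
  set Cm : Matrix (Fin N) (Fin N) ℝ := Matrix.of fun (m i : Fin N) => (Qpoly x i).coeff (m : ℕ) with hC
  have hdet2 : sprod x * Cm.det = sigmaC N * sprod x ^ 2 := by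
    have h := congrArg Matrix.det (vand_mul_self x)
    rwa [Matrix.det_mul, Matrix.det_vandermonde, Matrix.det_diagonal, prod_erase_eq] at h
  have hsx := (sprod_pos hx).ne'
  have hCdet : Cm.det = sigmaC N * sprod x := by
    have h := hdet2.trans (by ring : sigmaC N * sprod x ^ 2 = sprod x * (sigmaC N * sprod x))
    exact mul_left_cancel₀ hsx h
  have hM : Mmat x = -(Matrix.vandermonde (fun k : Fin N => (k : ℝ)) * Cm) := by
    rw [vand_mul_coeff]
    ext k i
    simp [Mmat]
  rw [hM, Matrix.det_neg, Matrix.det_mul, hCdet, Fintype.card_fin, Kconst]; ring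

lemma isOpen_strictMono : IsOpen {v : Fin N → ℝ | StrictMono v} := by
  have h : {v : Fin N → ℝ | StrictMono v}
      = ⋂ (i : Fin N) (j : Fin N), {v : Fin N → ℝ | i < j → v i < v j} := by
    ext v
    simp only [Set.mem_setOf_eq, Set.mem_iInter]
    exact ⟨fun hv i j hij => hv hij, fun hv _ _ hij => hv _ _ hij⟩
  rw [h]
  refine isOpen_iInter_of_finite fun i => isOpen_iInter_of_finite fun j => ?_
  by_cases hij : i < j
  · have h2 : {v : Fin N → ℝ | i < j → v i < v j} = {v : Fin N → ℝ | v i < v j} := by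
      ext v; simp [hij]
    rw [h2]; exact isOpen_lt (continuous_apply i) (continuous_apply j)
  · have h2 : {v : Fin N → ℝ | i < j → v i < v j} = Set.univ := by
      ext v; simp [hij]
    rw [h2]; exact isOpen_univ

lemma root_unique {a b : Fin N → ℝ} (ha : StrictMono a) (hb : StrictMono b)
    (h : ∀ z : ℝ, (∏ k, (z - a k)) = ∏ k, (z - b k)) : a = b := by
  have hpoly : (∏ k, (Polynomial.X - Polynomial.C (a k)))
      = ∏ k, (Polynomial.X - Polynomial.C (b k)) :=
    Polynomial.funext fun r => by simpa [Polynomial.eval_prod] using h r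
  have hmul : Multiset.map a Finset.univ.val = Multiset.map b Finset.univ.val := by
    have h1 : ((Finset.univ.val.map a).map fun r => Polynomial.X - Polynomial.C r).prod
        = ((Finset.univ.val.map b).map fun r => Polynomial.X - Polynomial.C r).prod := by
      rw [Multiset.map_map, Multiset.map_map]
      simpa [Finset.prod_eq_multiset_prod, Function.comp] using hpoly
    have h2 := congrArg Polynomial.roots h1
    rwa [Polynomial.roots_multiset_prod_X_sub_C, Polynomial.roots_multiset_prod_X_sub_C] at h2
  set s : Finset ℝ := Finset.univ.image a with hs
  have hcard : s.card = N := by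
    rw [hs, Finset.card_image_of_injective _ ha.injective, Finset.card_univ, Fintype.card_fin]
  have himg : Finset.univ.image b = s := by
    refine Finset.val_inj.1 ?_
    rw [hs, Finset.image_val, Finset.image_val, hmul]
  have hA := Finset.orderEmbOfFin_unique hcard
    (fun i => Finset.mem_image_of_mem a (Finset.mem_univ i)) ha
  have hB := Finset.orderEmbOfFin_unique hcard
    (fun i => himg ▸ Finset.mem_image_of_mem b (Finset.mem_univ i)) hb
  exact hA.trans hB.symm

lemma monic_P (w : Fin N → ℝ) : (∏ i, (Polynomial.X - Polynomial.C (w i))).Monic :=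
  Polynomial.monic_prod_of_monic _ _ fun i _ => Polynomial.monic_X_sub_C _

lemma natDegree_P (w : Fin N → ℝ) :
    (∏ i, (Polynomial.X - Polynomial.C (w i))).natDegree = N := by
  rw [Polynomial.natDegree_prod_of_monic _ _ fun i _ => Polynomial.monic_X_sub_C _]
  simp [Polynomial.natDegree_X_sub_C]

lemma ext_from_samples (hN : 1 ≤ N) {w y' : Fin N → ℝ} (t : ℝ)
    (h : ∀ k : Fin N, (∏ i, (((k : Fin N) : ℝ)- w i)) - t = ∏ i, (((k : Fin N) : ℝ) - y' i)) :
    ∀ z : ℝ, (∏ i, (z - w i)) - t = ∏ i, (z - y' i) := by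
  set A := ∏ i, (Polynomial.X - Polynomial.C (w i)) with hA
  set B := ∏ i, (Polynomial.X - Polynomial.C (y' i)) with hB
  have hevalA : ∀ z : ℝ, A.eval z = ∏ i, (z - w i) := fun z => by
    simp [hA, Polynomial.eval_prod]
  have hevalB : ∀ z : ℝ, B.eval z = ∏ i, (z - y' i) := fun z => by
    simp [hB, Polynomial.eval_prod]
  set p := A - Polynomial.C t - B with hp
  have hp0 : p = 0 := by
    rcases eq_or_ne p 0 with h0 | h0
    · exact h0
    refine Polynomial.eq_zero_of_natDegree_lt_card_of_eval_eq_zero p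
      (f := fun k : Fin N => (k : ℝ))
      (fun a b hab => Fin.ext (Nat.cast_injective hab)) (fun k => ?_) ?_
    · rw [hp, Polynomial.eval_sub, Polynomial.eval_sub, Polynomial.eval_C, hevalA, hevalB]
      have hk := h k
      linarith
    · rw [Fintype.card_fin, Polynomial.natDegree_lt_iff_degree_lt h0,
        Polynomial.degree_lt_iff_coeff_zero]
      intro m hm
      have hm' : N ≤ m := by exact_mod_cast hm
      have hAB : A.coeff m = B.coeff m := by
        rcases eq_or_lt_of_le hm' with h1 | h1
        · have hAm : A.coeff m = 1 := by
            rw [← h1]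
            have := (monic_P w).coeff_natDegree
            rwa [natDegree_P] at this
          have hBm : B.coeff m = 1 := by
            rw [← h1]
            have := (monic_P y').coeff_natDegree
            rwa [natDegree_P] at this
          rw [hAm, hBm]
        · rw [Polynomial.coeff_eq_zero_of_natDegree_lt (by rw [natDegree_P]; exact h1),
            Polynomial.coeff_eq_zero_of_natDegree_lt (by rw [natDegree_P]; exact h1)]
      have hCt : (Polynomial.C t).coeff m = 0 := by
        rw [Polynomial.coeff_C, if_neg]
        omega
      rw [hp, Polynomial.coeff_sub, Polynomial.coeff_sub, hAB, hCt]
      ring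
  intro z
  have h1 := congrArg (Polynomial.eval z) hp0
  rw [hp, Polynomial.eval_sub, Polynomial.eval_sub, Polynomial.eval_C, hevalA, hevalB,
    Polynomial.eval_zero] at h1
  linarith

lemma main (N : ℕ) (hN : 1 ≤ N) (t : ℝ) (x : Fin N → ℝ) (hx : x ∈ ANt N t) :
    DifferentiableAt ℝ (rootMap N t) x ∧
      |LinearMap.det (fderiv ℝ (rootMap N t) x).toLinearMap| =
        vdm x / vdm (rootMap N t x) := by
  classical
  obtain ⟨hxm, hex⟩ := hx
  have hroot : rootMap N t x = hex.choose := by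
    unfold rootMap
    rw [dif_pos hex]
  have hym : StrictMono (rootMap N t x) := by rw [hroot]; exact hex.choose_spec.1
  have hid : ∀ z : ℝ, (∏ k, (z - x k)) - t = ∏ k, (z - rootMap N t x k) := by
    intro z
    have h1 := hex.choose_spec.2 z
    rw [hroot]
    exact h1
  set y := rootMap N t x with hy
  set Φ : (Fin N → ℝ) → (Fin N → ℝ) := fun w => Emap N w - fun _ => t with hΦ
  have hΦx : Φ x = Emap N y := by
    funext k
    have h1 := hid ((k : Fin N) : ℝ)
    simpa [hΦ, Emap] using h1
  have hdety : LinearMap.det (Matrix.toLin' (Mmat y)) ≠ 0 := by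
    rw [LinearMap.det_toLin', det_Mmat y hym]
    exact mul_ne_zero (Kconst_ne_zero N) (sprod_pos hym).ne'
  set eqv : (Fin N → ℝ) ≃ₗ[ℝ] (Fin N → ℝ) := LinearMap.equivOfDetNeZero _ hdety with heqv
  set eqL : (Fin N → ℝ) ≃L[ℝ] (Fin N → ℝ) := eqv.toContinuousLinearEquiv with heqL
  have h2 : (eqv : (Fin N → ℝ) →ₗ[ℝ] (Fin N → ℝ)) = Matrix.toLin' (Mmat y) :=
    LinearEquiv.coe_ofIsUnitDet _
  have hLy : ((eqL : (Fin N → ℝ) →L[ℝ] (Fin N → ℝ))) = Lmap y := by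
    ext v
    simp only [ContinuousLinearEquiv.coe_coe, heqL, LinearEquiv.coe_toContinuousLinearEquiv',
      Lmap, LinearMap.coe_toContinuousLinearMap']
    rw [← h2]
    rfl
  have hE : HasStrictFDerivAt (Emap N) ((eqL : (Fin N → ℝ) →L[ℝ] (Fin N → ℝ))) y := by
    rw [hLy]; exact hasStrict_Emap y
  set g := hE.localInverse (Emap N) eqL y with hg
  have hΦd : HasStrictFDerivAt Φ (Lmap x) x := (hasStrict_Emap x).sub_const _
  have hTend : Filter.Tendsto Φ (nhds x) (nhds (Emap N y)) := by
    have h1 := hΦd.continuousAt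
    rw [ContinuousAt, hΦx] at h1
    exact h1
  have ev1 : ∀ᶠ w in nhds x, Emap N (g (Φ w)) = Φ w :=
    hTend.eventually hE.eventually_right_inverse
  have hgy : g (Emap N y) = y := hE.localInverse_apply_image
  have gTend : Filter.Tendsto (fun w => g (Φ w)) (nhds x) (nhds y) := by
    have h1 : Filter.Tendsto g (nhds (Emap N y)) (nhds y) := by
      have h3 := hE.localInverse_continuousAt
      rw [← hg] at h3
      rw [ContinuousAt, hgy] at h3
      exact h3
    exact h1.comp hTend
  have ev2 : ∀ᶠ w in nhds x, StrictMono (g (Φ w)) :=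
    gTend.eventually (isOpen_strictMono.eventually_mem hym)
  have ev3 : ∀ᶠ w in nhds x, StrictMono w := isOpen_strictMono.eventually_mem hxm
  have hevEq : rootMap N t =ᶠ[nhds x] fun w => g (Φ w) := by
    filter_upwards [ev1, ev2, ev3] with w h1 h2' h3
    have hidw : ∀ z : ℝ, (∏ i, (z - w i)) - t = ∏ i, (z - (g (Φ w)) i) := by
      refine ext_from_samples hN t fun k => ?_
      have h4 := congrFun h1 k
      have h5 : (∏ i, (((k : Fin N) : ℝ) - (g (Φ w)) i)) = (∏ i, (((k : Fin N) : ℝ) - w i)) - t := h4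
      linarith [h5]
    have hw : ∃ y0 : Fin N → ℝ, StrictMono y0 ∧
        ∀ z : ℝ, (∏ k, (z - w k)) - t = ∏ k, (z - y0 k) := ⟨g (Φ w), h2', hidw⟩
    have hr : rootMap N t w = hw.choose := by
      unfold rootMap
      rw [dif_pos hw]
    rw [hr]
    exact root_unique hw.choose_spec.1 h2' fun z => (hw.choose_spec.2 z).symm.trans (hidw z)
  have hgd : HasFDerivAt (fun w => g (Φ w))
      (((eqL.symm : (Fin N → ℝ) →L[ℝ] (Fin N → ℝ))).comp (Lmap x)) x := by
    have h1 : HasFDerivAt g (eqL.symm : (Fin N → ℝ) →L[ℝ] (Fin N → ℝ)) (Φ x) := by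
      rw [hΦx]
      exact hE.to_localInverse.hasFDerivAt
    exact h1.comp x hΦd.hasFDerivAt
  have hRd : HasFDerivAt (rootMap N t)
      (((eqL.symm : (Fin N → ℝ) →L[ℝ] (Fin N → ℝ))).comp (Lmap x)) x :=
    hgd.congr_of_eventuallyEq hevEq
  refine ⟨hRd.differentiableAt, ?_⟩
  rw [hRd.fderiv]
  have hsplitdet : LinearMap.det
      ((((eqL.symm : (Fin N → ℝ) →L[ℝ] (Fin N → ℝ))).comp (Lmap x)).toLinearMap)
      = LinearMap.det ((eqL.symm : (Fin N → ℝ) →L[ℝ] (Fin N → ℝ)) :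
          (Fin N → ℝ) →ₗ[ℝ] (Fin N → ℝ)) * LinearMap.det (Matrix.toLin' (Mmat x)) := by
    rw [ContinuousLinearMap.toLinearMap_comp, LinearMap.det_comp]
    rfl
  have hdet_eqL : LinearMap.det ((eqL : (Fin N → ℝ) →L[ℝ] (Fin N → ℝ)) :
      (Fin N → ℝ) →ₗ[ℝ] (Fin N → ℝ)) = Kconst N * sprod y := by
    have h3 : ((eqL : (Fin N → ℝ) →L[ℝ] (Fin N → ℝ)) : (Fin N → ℝ) →ₗ[ℝ] (Fin N → ℝ))
        = Matrix.toLin' (Mmat y) := by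
      rw [hLy]
      rfl
    rw [h3, LinearMap.det_toLin', det_Mmat y hym]
  have hinv : LinearMap.det ((eqL.symm : (Fin N → ℝ) →L[ℝ] (Fin N → ℝ)) :
      (Fin N → ℝ) →ₗ[ℝ] (Fin N → ℝ)) = (Kconst N * sprod y)⁻¹ := by
    have hid2 : (((eqL.symm : (Fin N → ℝ) →L[ℝ] (Fin N → ℝ))) :
        (Fin N → ℝ) →ₗ[ℝ] (Fin N → ℝ)).comp
        (((eqL : (Fin N → ℝ) →L[ℝ] (Fin N → ℝ))) : (Fin N → ℝ) →ₗ[ℝ] (Fin N → ℝ))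
        = LinearMap.id := by
      ext v
      simp
    have h4 := congrArg LinearMap.det hid2
    rw [LinearMap.det_comp, LinearMap.det_id, hdet_eqL] at h4
    exact eq_inv_of_mul_eq_one_left h4
  have hdx : LinearMap.det (Matrix.toLin' (Mmat x)) = Kconst N * sprod x := by
    rw [LinearMap.det_toLin', det_Mmat x hxm]
  rw [hsplitdet, hinv, hdx, vdm_eq_sprod, vdm_eq_sprod]
  have hK := Kconst_ne_zero N
  have hsy := sprod_pos hym
  have hsx := sprod_pos hxm
  have harith : (Kconst N * sprod y)⁻¹ * (Kconst N * sprod x) = sprod x / sprod y := by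
    field_simp
  rw [harith, abs_of_pos (div_pos hsx hsy)]

end RootJacAux

theorem root_jacobian (N : ℕ) (hN : 1 ≤ N) :
    (∀ t : ℝ, ∀ x ∈ ANt N t,
      DifferentiableAt ℝ (rootMap N t) x ∧
      |LinearMap.det (fderiv ℝ (rootMap N t) x).toLinearMap| =
        vdm x / vdm (rootMap N t x)) ∧
    (∀ ε : ℝ, 0 < ε → ∀ lamm ∈ ANt N (4 * ε),
      |LinearMap.det (fderiv ℝ (rootMap N (4 * ε)) lamm).toLinearMap| =
        vdm lamm / vdm (rootMap N (4 * ε) lamm)) ∧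
    (∀ ε : ℝ, 0 < ε → ∀ eta ∈ ANt N (2 * ε),
      |LinearMap.det (fderiv ℝ (rootMap N (2 * ε)) eta).toLinearMap| =
        vdm eta / vdm (rootMap N (2 * ε) eta)) := by
  refine ⟨fun t x hx => RootJacAux.main N hN t x hx, ?_, ?_⟩
  · exact fun ε _ lamm h => (RootJacAux.main N hN _ lamm h).2
  · exact fun ε _ eta h => (RootJacAux.main N hN _ eta h).2
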